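/- arXiv:2311.00521 — 2 statements merged into one kernel-verified Lean document; each statement's English description precedes it below -/
import Mathlib

section
/- Let d ≥ 1, L > 0, σ ≥ 0, and let f : ℝ^d → ℝ be L-smooth. Suppose f attains its minimum at x⋆ and f_σ attains its minimum at x⋆_σ. Then 0 ≤ f_σ(x⋆_σ) − f(x⋆) ≤ σ²Ld/4. -/
open MeasureTheory
open scoped Classical

/-- Gaussian smoothing of `f : ℝ^d → ℝ` with radius `σ`:
`f_σ(x) = π^(−d/2) ∫ f(x + σu) e^(−‖u‖²) du`, with `f_0 = f`. -/
noncomputable def gsmooth {d : ℕ} (f : EuclideanSpace ℝ (Fin d) → ℝ) (σ : ℝ)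
    (x : EuclideanSpace ℝ (Fin d)) : ℝ :=
  if σ = 0 then f x
  else Real.pi ^ (-(d : ℝ) / 2) *
    ∫ u : EuclideanSpace ℝ (Fin d), f (x + σ • u) * Real.exp (-‖u‖ ^ 2)

section gsaux
open Real
section aux
variable {d : ℕ}

lemma int_exp_V : ∫ u : EuclideanSpace ℝ (Fin d), rexp (-‖u‖ ^ 2) = Real.pi ^ ((d : ℝ) / 2) := by
  have := GaussianFourier.integral_rexp_neg_mul_sq_norm (V := EuclideanSpace ℝ (Fin d)) (b := 1) one_pos
  simpa [finrank_euclideanSpace_fin] using this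

lemma norm_symm_sq (x : Fin d → ℝ) :
    ‖(MeasurableEquiv.toLp 2 (Fin d → ℝ)) x‖ ^ 2 = ∑ i, x i ^ 2 := by
  rw [EuclideanSpace.norm_eq, Real.sq_sqrt (by positivity)]
  simp [MeasurableEquiv.coe_toLp]

end aux

lemma int_t2_Ioi : ∫ t in Set.Ioi (0:ℝ), t ^ 2 * rexp (-t ^ 2) = Real.sqrt π / 4 := by
  have h := integral_rpow_mul_exp_neg_rpow (p := 2) (q := 2) (by norm_num) (by norm_num)
  have he : ∀ t ∈ Set.Ioi (0:ℝ), t ^ (2:ℝ) * rexp (-t ^ (2:ℝ)) = t ^ 2 * rexp (-t ^ 2) := by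
    intro t _
    rw [show ((2:ℝ)) = ((2:ℕ):ℝ) by norm_num, Real.rpow_natCast]
  rw [setIntegral_congr_fun measurableSet_Ioi he] at h
  rw [h, show ((2:ℝ)+1)/2 = 1/2 + 1 by norm_num, Real.Gamma_add_one (by norm_num),
    Real.Gamma_one_half_eq]
  ring

lemma int_t2 : ∫ t : ℝ, t ^ 2 * rexp (-t ^ 2) = Real.sqrt π / 2 := by
  have hint : Integrable fun t : ℝ => t ^ 2 * rexp (-t ^ 2) := by
    have := integrable_rpow_mul_exp_neg_mul_sq (b := 1) one_pos (s := 2) (by norm_num)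
    have h2 : ∀ t : ℝ, t ^ (2:ℝ) = t ^ 2 := fun t => by rw [show ((2:ℝ)) = ((2:ℕ):ℝ) by norm_num, Real.rpow_natCast]
    simpa [h2] using this
  have hsplit := intervalIntegral.integral_Iic_add_Ioi (b := (0:ℝ)) (μ := volume)
    hint.integrableOn hint.integrableOn
  have hneg := integral_comp_neg_Iic (0:ℝ) (fun t => t ^ 2 * rexp (-t ^ 2))
  simp only [neg_sq, neg_zero] at hneg
  rw [← hsplit, hneg, int_t2_Ioi]
  ring

section aux2
variable {d : ℕ}

lemma comp_symm_exp :
    (fun u : EuclideanSpace ℝ (Fin d) => rexp (-‖u‖ ^ 2)) ∘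
      (MeasurableEquiv.toLp 2 (Fin d → ℝ))
    = fun x : Fin d → ℝ => ∏ i, rexp (-(x i) ^ 2) := by
  funext x
  simp only [Function.comp_apply, norm_symm_sq, ← Real.exp_sum, ← Finset.sum_neg_distrib]

lemma integrable_exp_V : Integrable fun u : EuclideanSpace ℝ (Fin d) => rexp (-‖u‖ ^ 2) := by
  rw [← ((EuclideanSpace.volume_preserving_symm_measurableEquiv_toLp (Fin d)).symm _).integrable_comp_emb
    (MeasurableEquiv.measurableEmbedding _), MeasurableEquiv.symm_symm, comp_symm_exp]
  exact Integrable.fintype_prod (f := fun (_ : Fin d) (t : ℝ) => rexp (-t ^ 2))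
    fun i => by simpa using integrable_exp_neg_mul_sq one_pos

lemma comp_symm_sq_exp :
    (fun u : EuclideanSpace ℝ (Fin d) => ‖u‖ ^ 2 * rexp (-‖u‖ ^ 2)) ∘
      (MeasurableEquiv.toLp 2 (Fin d → ℝ))
    = fun x : Fin d → ℝ => ∑ i, ∏ j, ((if j = i then (x j) ^ 2 else 1) * rexp (-(x j) ^ 2)) := by
  funext x
  simp only [Function.comp_apply, norm_symm_sq]
  rw [Finset.sum_mul]
  congr 1
  funext i
  rw [Finset.prod_mul_distrib, Finset.prod_ite_eq' Finset.univ i (fun j => (x j) ^ 2)]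
  simp [← Real.exp_sum, ← Finset.sum_neg_distrib]

lemma integrable_1d (i j : Fin d) :
    Integrable (fun t : ℝ => (if j = i then t ^ 2 else 1) * rexp (-t ^ 2)) := by
  by_cases h : j = i
  · simp only [if_pos h]
    have := integrable_rpow_mul_exp_neg_mul_sq (b := 1) one_pos (s := 2) (by norm_num)
    have h2 : ∀ t : ℝ, t ^ (2:ℝ) = t ^ 2 := fun t => by
      rw [show ((2:ℝ)) = ((2:ℕ):ℝ) by norm_num, Real.rpow_natCast]
    simpa [h2] using this
  · simp only [if_neg h, one_mul]
    simpa using integrable_exp_neg_mul_sq (b := 1) one_pos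

lemma integrable_sq_exp_V :
    Integrable fun u : EuclideanSpace ℝ (Fin d) => ‖u‖ ^ 2 * rexp (-‖u‖ ^ 2) := by
  rw [← ((EuclideanSpace.volume_preserving_symm_measurableEquiv_toLp (Fin d)).symm _).integrable_comp_emb
    (MeasurableEquiv.measurableEmbedding _), MeasurableEquiv.symm_symm, comp_symm_sq_exp]
  exact integrable_finset_sum _ fun i _ => Integrable.fintype_prod fun j => integrable_1d i j

lemma int_sq_exp_V :
    ∫ u : EuclideanSpace ℝ (Fin d), ‖u‖ ^ 2 * rexp (-‖u‖ ^ 2)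
      = (d / 2 : ℝ) * Real.pi ^ ((d : ℝ) / 2) := by
  rw [← ((EuclideanSpace.volume_preserving_symm_measurableEquiv_toLp (Fin d)).symm _).integral_comp
    (MeasurableEquiv.measurableEmbedding _), MeasurableEquiv.symm_symm]
  rw [show (fun x : Fin d → ℝ => (fun u : EuclideanSpace ℝ (Fin d) => ‖u‖ ^ 2 * rexp (-‖u‖ ^ 2))
      ((MeasurableEquiv.toLp 2 (Fin d → ℝ)) x))
    = fun x : Fin d → ℝ => ∑ i, ∏ j, ((if j = i then (x j) ^ 2 else 1) * rexp (-(x j) ^ 2))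
    from comp_symm_sq_exp]
  rw [integral_finset_sum (μ := volume) _ fun i _ => Integrable.fintype_prod fun j => integrable_1d i j]
  have hterm : ∀ i : Fin d,
      (∫ x : Fin d → ℝ, ∏ j, ((if j = i then (x j) ^ 2 else 1) * rexp (-(x j) ^ 2)))
        = (1 / 2 : ℝ) * Real.pi ^ ((d : ℝ) / 2) := by
    intro i
    rw [integral_fintype_prod_volume_eq_prod (f := fun j (t : ℝ) => (if j = i then t ^ 2 else 1)
      * rexp (-t ^ 2))]
    have hj : ∀ j : Fin d, (∫ t : ℝ, (if j = i then t ^ 2 else 1) * rexp (-t ^ 2))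
        = (if j = i then (1/2:ℝ) else 1) * Real.sqrt π := by
      intro j
      by_cases h : j = i
      · simp only [if_pos h]
        rw [int_t2]; ring
      · simp only [if_neg h, one_mul]
        simpa using integral_gaussian 1
    simp only [hj]
    rw [Finset.prod_mul_distrib, Finset.prod_ite_eq' Finset.univ i (fun _ => (1/2:ℝ)),
      Finset.prod_const]
    have hs : Real.sqrt π ^ (Finset.univ (α := Fin d)).card = Real.pi ^ ((d : ℝ) / 2) := by
      rw [Finset.card_univ, Fintype.card_fin, Real.sqrt_eq_rpow, ← Real.rpow_natCast (π ^ _) d,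
        ← Real.rpow_mul pi_pos.le]
      congr 1
      ring
    rw [hs]
    simp
  simp only [hterm, Finset.sum_const, Finset.card_univ, Fintype.card_fin, nsmul_eq_mul]
  ring
end aux2

section descent
variable {d : ℕ}

lemma gradient_lipschitz_cont {L : ℝ} (hL : 0 < L) (f : EuclideanSpace ℝ (Fin d) → ℝ)
    (hgrad : ∀ x y, ‖gradient f x - gradient f y‖ ≤ L * ‖x - y‖) :
    Continuous (gradient f) := by
  have : LipschitzWith (Real.toNNReal L) (gradient f) := by
    apply LipschitzWith.of_dist_le_mul
    intro x y
    rw [dist_eq_norm, dist_eq_norm, Real.coe_toNNReal _ hL.le]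
    exact hgrad x y
  exact this.continuous

lemma descent_lemma {L : ℝ} (hL : 0 < L) (f : EuclideanSpace ℝ (Fin d) → ℝ)
    (hdiff : Differentiable ℝ f)
    (hgrad : ∀ x y, ‖gradient f x - gradient f y‖ ≤ L * ‖x - y‖)
    {x0 : EuclideanSpace ℝ (Fin d)} (h0 : gradient f x0 = 0)
    (y : EuclideanSpace ℝ (Fin d)) :
    f y ≤ f x0 + L / 2 * ‖y - x0‖ ^ 2 := by
  set v := y - x0 with hv
  have key : ∀ t : ℝ, HasDerivAt (fun s : ℝ => f (x0 + s • v))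
      (inner ℝ (gradient f (x0 + t • v)) v : ℝ) t := by
    intro t
    have h1 : HasFDerivAt f (InnerProductSpace.toDual ℝ _ (gradient f (x0 + t • v)))
        (x0 + t • v) := (hdiff _).hasGradientAt.hasFDerivAt
    have h2 : HasDerivAt (fun s : ℝ => x0 + s • v) v t := by
      simpa using ((hasDerivAt_id t).smul_const v).const_add x0
    have h3 := h1.comp_hasDerivAt t h2
    simpa [InnerProductSpace.toDual_apply_apply, Function.comp_def] using h3
  have hgc : Continuous fun t : ℝ => (inner ℝ (gradient f (x0 + t • v)) v : ℝ) := by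
    exact (((gradient_lipschitz_cont hL f hgrad).comp
      (continuous_const.add (continuous_id.smul continuous_const))).inner continuous_const)
  have hftc : f (x0 + (1:ℝ) • v) - f (x0 + (0:ℝ) • v)
      = ∫ t in (0:ℝ)..1, (inner ℝ (gradient f (x0 + t • v)) v : ℝ) :=
    (intervalIntegral.integral_eq_sub_of_hasDerivAt (fun t _ => key t)
      (hgc.intervalIntegrable 0 1)).symm
  have hmono : ∫ t in (0:ℝ)..1, (inner ℝ (gradient f (x0 + t • v)) v : ℝ)
      ≤ ∫ t in (0:ℝ)..1, L * t * ‖v‖ ^ 2 := by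
    apply intervalIntegral.integral_mono_on zero_le_one (hgc.intervalIntegrable 0 1)
      (Continuous.intervalIntegrable (by continuity) 0 1)
    intro t ht
    calc (inner ℝ (gradient f (x0 + t • v)) v : ℝ)
        = inner ℝ (gradient f (x0 + t • v) - gradient f x0) v := by rw [h0, sub_zero]
      _ ≤ ‖gradient f (x0 + t • v) - gradient f x0‖ * ‖v‖ := real_inner_le_norm _ _
      _ ≤ (L * ‖(x0 + t • v) - x0‖) * ‖v‖ :=
          mul_le_mul_of_nonneg_right (hgrad _ _) (norm_nonneg _)
      _ = L * t * ‖v‖ ^ 2 := by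
          rw [add_sub_cancel_left, norm_smul, Real.norm_eq_abs, abs_of_nonneg ht.1]
          ring
  have hval : ∫ t in (0:ℝ)..1, L * t * ‖v‖ ^ 2 = L / 2 * ‖v‖ ^ 2 := by
    have : (fun t : ℝ => L * t * ‖v‖ ^ 2) = fun t : ℝ => (L * ‖v‖ ^ 2) * t := by
      funext t; ring
    rw [this, intervalIntegral.integral_const_mul, integral_id]
    ring
  have := hftc ▸ (hval ▸ hmono)
  have h1 : x0 + (1:ℝ) • v = y := by rw [one_smul, hv]; abel
  have h0' : x0 + (0:ℝ) • v = x0 := by rw [zero_smul, add_zero]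
  rw [h1, h0'] at this
  linarith

end descent


set_option maxHeartbeats 1000000 in
/-- For `f` `L`-smooth with minimizer `x⋆` of `f` and minimizer `x⋆_σ` of `f_σ`,
`0 ≤ f_σ(x⋆_σ) − f(x⋆) ≤ σ²Ld/4`. -/
theorem gsmooth_min_bound_lsmooth {d : ℕ} (hd : 1 ≤ d) {L σ : ℝ} (hL : 0 < L) (hσ : 0 ≤ σ)
    (f : EuclideanSpace ℝ (Fin d) → ℝ)
    (hdiff : Differentiable ℝ f)
    (hgrad : ∀ x y, ‖gradient f x - gradient f y‖ ≤ L * ‖x - y‖)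
    (xstar xsig : EuclideanSpace ℝ (Fin d))
    (hmin : ∀ y, f xstar ≤ f y)
    (hminsig : ∀ y, gsmooth f σ xsig ≤ gsmooth f σ y) :
    0 ≤ gsmooth f σ xsig - f xstar ∧ gsmooth f σ xsig - f xstar ≤ σ ^ 2 * L * d / 4 := by
  have h0 : gradient f xstar = 0 := by
    have hloc : IsLocalMin f xstar := Filter.Eventually.of_forall hmin
    rw [gradient, hloc.fderiv_eq_zero, map_zero]
  by_cases hσ0 : σ = 0
  · subst hσ0
    have e1 : gsmooth f 0 xsig = f xsig := by simp [gsmooth]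
    have e2 : gsmooth f 0 xstar = f xstar := by simp [gsmooth]
    have h1 := hmin xsig
    have h2 := hminsig xstar
    rw [e1, e2] at *
    constructor
    · linarith
    · have : (0:ℝ) ^ 2 * L * d / 4 = 0 := by ring
      rw [this]; linarith
  · have hσpos : 0 < σ := lt_of_le_of_ne hσ (Ne.symm hσ0)
    set c : ℝ := Real.pi ^ (-(d : ℝ) / 2) with hc
    have hcpos : 0 < c := Real.rpow_pos_of_pos Real.pi_pos _
    set P : ℝ := Real.pi ^ ((d : ℝ) / 2) with hP
    have hc1 : c * P = 1 := by
      rw [hc, hP, ← Real.rpow_add Real.pi_pos,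
        show (-(d:ℝ)/2 + (d:ℝ)/2) = 0 by ring, Real.rpow_zero]
    have hdes := descent_lemma hL f hdiff hgrad h0
    have hup : ∀ (x : EuclideanSpace ℝ (Fin d)) u,
        f (x + σ • u) ≤ f xstar + L / 2 * ‖(x - xstar) + σ • u‖ ^ 2 := by
      intro x u
      have := hdes (x + σ • u)
      rwa [show x + σ • u - xstar = (x - xstar) + σ • u from by abel] at this
    -- integrability
    have hmeas : ∀ x : EuclideanSpace ℝ (Fin d),
        AEStronglyMeasurable (fun u : EuclideanSpace ℝ (Fin d) =>
          f (x + σ • u) * Real.exp (-‖u‖ ^ 2)) volume := by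
      intro x
      exact ((hdiff.continuous.comp (continuous_const.add
        ((continuous_const : Continuous fun _ : EuclideanSpace ℝ (Fin d) => σ).smul continuous_id))).mul
        (((continuous_norm.pow 2).neg).rexp)).aestronglyMeasurable
    have habs : ∀ (x : EuclideanSpace ℝ (Fin d)) u,
        |f (x + σ • u)| ≤ (|f xstar| + L * ‖x - xstar‖ ^ 2) + (L * σ ^ 2) * ‖u‖ ^ 2 := by
      intro x u
      have hlow := hmin (x + σ • u)
      have hhigh := hup x u
      have hsq : ‖(x - xstar) + σ • u‖ ^ 2 ≤ 2 * ‖x - xstar‖ ^ 2 + 2 * (σ ^ 2 * ‖u‖ ^ 2) := by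
        have h2 : ‖σ • u‖ = σ * ‖u‖ := by
          rw [norm_smul, Real.norm_eq_abs, abs_of_nonneg hσ]
        have h1 : ‖(x - xstar) + σ • u‖ ≤ ‖x - xstar‖ + σ * ‖u‖ := by
          rw [← h2]; exact norm_add_le _ _
        have h3 : ‖(x - xstar) + σ • u‖ ^ 2 ≤ (‖x - xstar‖ + σ * ‖u‖) ^ 2 :=
          pow_le_pow_left₀ (norm_nonneg _) h1 2
        nlinarith [sq_nonneg (‖x - xstar‖ - σ * ‖u‖)]
      have hmul := mul_le_mul_of_nonneg_left hsq (by positivity : (0:ℝ) ≤ L / 2)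
      rw [abs_le]
      refine ⟨?_, ?_⟩
      · have h5 : -|f xstar| ≤ f xstar := neg_abs_le _
        have h6 : (0:ℝ) ≤ L * ‖x - xstar‖ ^ 2 := by positivity
        have h7 : (0:ℝ) ≤ (L * σ ^ 2) * ‖u‖ ^ 2 := by positivity
        linarith
      · have h5 : f xstar ≤ |f xstar| := le_abs_self _
        linarith
    have hint : ∀ x : EuclideanSpace ℝ (Fin d),
        Integrable (fun u : EuclideanSpace ℝ (Fin d) =>
          f (x + σ • u) * Real.exp (-‖u‖ ^ 2)) volume := by
      intro x
      apply Integrable.mono'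
        (g := fun u : EuclideanSpace ℝ (Fin d) =>
          (|f xstar| + L * ‖x - xstar‖ ^ 2) * Real.exp (-‖u‖ ^ 2)
            + (L * σ ^ 2) * (‖u‖ ^ 2 * Real.exp (-‖u‖ ^ 2)))
        ((integrable_exp_V.const_mul _).add (integrable_sq_exp_V.const_mul _)) (hmeas x)
      filter_upwards with u
      rw [Real.norm_eq_abs, abs_mul, abs_of_pos (Real.exp_pos _)]
      have he := (Real.exp_pos (-‖u‖ ^ 2)).le
      have h4 := mul_le_mul_of_nonneg_right (habs x u) he
      have h5 : ((|f xstar| + L * ‖x - xstar‖ ^ 2) + (L * σ ^ 2) * ‖u‖ ^ 2)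
            * Real.exp (-‖u‖ ^ 2)
          = (|f xstar| + L * ‖x - xstar‖ ^ 2) * Real.exp (-‖u‖ ^ 2)
            + (L * σ ^ 2) * (‖u‖ ^ 2 * Real.exp (-‖u‖ ^ 2)) := by ring
      linarith
    have hgs : ∀ x, gsmooth f σ x
        = c * ∫ u : EuclideanSpace ℝ (Fin d), f (x + σ • u) * Real.exp (-‖u‖ ^ 2) := by
      intro x
      rw [gsmooth, if_neg hσ0]
    -- lower bound
    have hlow : f xstar ≤ gsmooth f σ xsig := by
      rw [hgs]
      have hmono : (f xstar) * P
          ≤ ∫ u : EuclideanSpace ℝ (Fin d), f (xsig + σ • u) * Real.exp (-‖u‖ ^ 2) := by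
        have h1 : ∫ u : EuclideanSpace ℝ (Fin d), f xstar * Real.exp (-‖u‖ ^ 2)
            = f xstar * P := by
          rw [integral_const_mul, int_exp_V, hP]
        rw [← h1]
        apply integral_mono (integrable_exp_V.const_mul _) (hint xsig)
        intro u
        exact mul_le_mul_of_nonneg_right (hmin _) (Real.exp_pos _).le
      calc f xstar = (c * P) * f xstar := by rw [hc1]; ring
        _ = c * (f xstar * P) := by ring
        _ ≤ c * _ := mul_le_mul_of_nonneg_left hmono hcpos.le
    -- upper bound
    have hupper : gsmooth f σ xsig ≤ f xstar + σ ^ 2 * L * d / 4 := by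
      have h1 := hminsig xstar
      have h2 : gsmooth f σ xstar ≤ f xstar + σ ^ 2 * L * d / 4 := by
        rw [hgs]
        have hptw : ∀ u : EuclideanSpace ℝ (Fin d),
            f (xstar + σ • u) * Real.exp (-‖u‖ ^ 2)
            ≤ f xstar * Real.exp (-‖u‖ ^ 2)
              + (L / 2 * σ ^ 2) * (‖u‖ ^ 2 * Real.exp (-‖u‖ ^ 2)) := by
          intro u
          have := hup xstar u
          rw [sub_self, zero_add, norm_smul, Real.norm_eq_abs, abs_of_nonneg hσ,
            mul_pow] at this
          have he := (Real.exp_pos (-‖u‖ ^ 2)).le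
          have h4 := mul_le_mul_of_nonneg_right this he
          have h5 : (f xstar + L / 2 * (σ ^ 2 * ‖u‖ ^ 2)) * Real.exp (-‖u‖ ^ 2)
              = f xstar * Real.exp (-‖u‖ ^ 2)
                + (L / 2 * σ ^ 2) * (‖u‖ ^ 2 * Real.exp (-‖u‖ ^ 2)) := by ring
          linarith
        have hmono : ∫ u : EuclideanSpace ℝ (Fin d), f (xstar + σ • u) * Real.exp (-‖u‖ ^ 2)
            ≤ f xstar * P + (L / 2 * σ ^ 2) * ((d / 2 : ℝ) * P) := by
          have h3 : ∫ u : EuclideanSpace ℝ (Fin d),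
              (f xstar * Real.exp (-‖u‖ ^ 2)
                + (L / 2 * σ ^ 2) * (‖u‖ ^ 2 * Real.exp (-‖u‖ ^ 2)))
              = f xstar * P + (L / 2 * σ ^ 2) * ((d / 2 : ℝ) * P) := by
            rw [integral_add (integrable_exp_V.const_mul _) (integrable_sq_exp_V.const_mul _),
              integral_const_mul, integral_const_mul, int_exp_V, int_sq_exp_V, hP]
          rw [← h3]
          exact integral_mono (hint xstar)
            ((integrable_exp_V.const_mul _).add (integrable_sq_exp_V.const_mul _)) hptw
        calc c * ∫ u : EuclideanSpace ℝ (Fin d), f (xstar + σ • u) * Real.exp (-‖u‖ ^ 2)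
            ≤ c * (f xstar * P + (L / 2 * σ ^ 2) * ((d / 2 : ℝ) * P)) :=
              mul_le_mul_of_nonneg_left hmono hcpos.le
          _ = (c * P) * (f xstar + σ ^ 2 * L * d / 4) := by ring
          _ = f xstar + σ ^ 2 * L * d / 4 := by rw [hc1, one_mul]
      linarith
    exact ⟨by linarith, by linarith⟩

end gsaux
end

section
/- Let d ≥ 1, L > 0, and let f : ℝ^d → ℝ be L-smooth and attain its minimum, with sublevel set f⋆(δ) = {x ∈ ℝ^d : f(x) − inf f ≤ δ} bounded for some δ > 0. Let (σ_n)_{n≥1} be a sequence with σ_n ≥ 0 and σ_n → 0. Then for every ε > 0 there exists N ∈ ℕ such that for all n ≥ N, every minimizer x⋆_{σ_n} of f_{σ_n} satisfies dist(x⋆_{σ_n}, f⋆(0)) = inf{‖x⋆_{σ_n} − x⋆‖ : x⋆ ∈ f⋆(0)} < ε. -/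
open MeasureTheory
open scoped Classical

section AuxGsmooth
open Real

variable {d : ℕ}

local notation "E" => EuclideanSpace ℝ (Fin d)

lemma aux_int_exp {b : ℝ} (hb : 0 < b) :
    Integrable (fun v : E => Real.exp (-b * ‖v‖ ^ 2)) := by
  have h := (GaussianFourier.integrable_cexp_neg_mul_sq_norm_add (V := E)
      (b := (b : ℂ)) (by simpa using hb) 0 0).norm
  refine h.congr (Filter.Eventually.of_forall fun v => ?_)
  show ‖Complex.exp _‖ = _
  rw [Complex.norm_exp]
  congr 1
  simp only [zero_mul, add_zero, ← Complex.ofReal_pow, ← Complex.ofReal_mul,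
    ← Complex.ofReal_neg, Complex.ofReal_re]

lemma aux_int_W : Integrable (fun v : E => Real.exp (-‖v‖ ^ 2)) := by
  have := aux_int_exp (d := d) one_pos
  simpa using this

lemma aux_int_sq_W : Integrable (fun v : E => ‖v‖ ^ 2 * Real.exp (-‖v‖ ^ 2)) := by
  have hG := Integrable.const_mul (aux_int_exp (d := d) (by norm_num : (0:ℝ) < 1/2)) (2:ℝ)
  refine hG.mono' ?_ (Filter.Eventually.of_forall fun v => ?_)
  · exact (continuous_norm.pow 2).mul
      (Real.continuous_exp.comp (continuous_norm.pow 2).neg) |>.aestronglyMeasurable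
  · have h1 : ‖v‖ ^ 2 * Real.exp (-(1/2 * ‖v‖ ^ 2)) ≤ 2 := by
      have hs : (0:ℝ) ≤ ‖v‖ ^ 2 / 2 := by positivity
      have h1 := Real.add_one_le_exp (‖v‖ ^ 2 / 2)
      have h2 : Real.exp (-(1/2 * ‖v‖ ^ 2)) * Real.exp (‖v‖ ^ 2 / 2) = 1 := by
        rw [← Real.exp_add]; ring_nf; exact Real.exp_zero
      nlinarith [mul_le_mul_of_nonneg_right h1 (Real.exp_pos (-(1/2 * ‖v‖ ^ 2))).le,
        (Real.exp_pos (-(1/2 * ‖v‖ ^ 2))).le]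
    have h2 : Real.exp (-‖v‖ ^ 2) = Real.exp (-(1/2 * ‖v‖ ^ 2)) * Real.exp (-(1/2) * ‖v‖ ^ 2) := by
      rw [← Real.exp_add]; ring_nf
    rw [Real.norm_eq_abs, abs_of_nonneg (by positivity)]
    calc ‖v‖ ^ 2 * Real.exp (-‖v‖ ^ 2)
        = (‖v‖ ^ 2 * Real.exp (-(1/2 * ‖v‖ ^ 2))) * Real.exp (-(1/2) * ‖v‖ ^ 2) := by
          rw [h2]; ring
      _ ≤ 2 * Real.exp (-(1/2) * ‖v‖ ^ 2) := by
          exact mul_le_mul_of_nonneg_right h1 (Real.exp_pos _).le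
      _ = 2 * Real.exp (-(1 / 2) * ‖v‖ ^ 2) := rfl

lemma aux_int_norm_W : Integrable (fun v : E => ‖v‖ * Real.exp (-‖v‖ ^ 2)) := by
  have h := (aux_int_W (d := d)).add (aux_int_sq_W (d := d))
  refine h.mono' ?_ (Filter.Eventually.of_forall fun v => ?_)
  · exact (continuous_norm.mul
      (Real.continuous_exp.comp (continuous_norm.pow 2).neg)).aestronglyMeasurable
  · rw [Real.norm_eq_abs, abs_of_nonneg (by positivity)]
    have : ‖v‖ ≤ 1 + ‖v‖ ^ 2 := by nlinarith [sq_nonneg (‖v‖ - 1)]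
    have he := (Real.exp_pos (-‖v‖ ^ 2)).le
    simp only [Pi.add_apply]
    nlinarith

lemma aux_integral_W : ∫ v : E, Real.exp (-‖v‖ ^ 2) = Real.pi ^ ((d : ℝ) / 2) := by
  have := GaussianFourier.integral_rexp_neg_mul_sq_norm (V := E) (b := 1) one_pos
  simpa [finrank_euclideanSpace_fin] using this

lemma aux_odd (g : E) :
    ∫ u : E, (inner ℝ g u : ℝ) * Real.exp (-‖u‖ ^ 2) = 0 := by
  have h := integral_neg_eq_self (fun u : E => (inner ℝ g u : ℝ) * Real.exp (-‖u‖ ^ 2)) volume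
  simp only [inner_neg_right, norm_neg, neg_mul, integral_neg] at h
  linarith

lemma aux_quad {L : ℝ} (hL : 0 ≤ L) (f : E → ℝ) (hdiff : Differentiable ℝ f)
    (hgrad : ∀ x y, ‖gradient f x - gradient f y‖ ≤ L * ‖x - y‖) (a b : E) :
    |f b - f a - (inner ℝ (gradient f a) (b - a) : ℝ)| ≤ L * ‖b - a‖ ^ 2 := by
  have hfd : ∀ z : E, fderiv ℝ f z = InnerProductSpace.toDual ℝ _ (gradient f z) := by
    intro z
    rw [gradient, LinearIsometryEquiv.apply_symm_apply]
  have key := Convex.norm_image_sub_le_of_norm_fderiv_le'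
    (f := f) (φ := fderiv ℝ f a) (s := segment ℝ a b) (C := L * ‖b - a‖)
    (fun z _ => hdiff z) ?_ (convex_segment a b) (left_mem_segment ℝ a b)
    (right_mem_segment ℝ a b)
  · have hφ : (fderiv ℝ f a) (b - a) = (inner ℝ (gradient f a) (b - a) : ℝ) := by
      rw [hfd a, InnerProductSpace.toDual_apply_apply]
    rw [hφ] at key
    calc |f b - f a - (inner ℝ (gradient f a) (b - a) : ℝ)| ≤ L * ‖b - a‖ * ‖b - a‖ := key
      _ = L * ‖b - a‖ ^ 2 := by ring
  · rintro z hz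
    have h1 : ‖fderiv ℝ f z - fderiv ℝ f a‖ = ‖gradient f z - gradient f a‖ := by
      rw [hfd z, hfd a, ← map_sub, LinearIsometryEquiv.norm_map]
    rw [h1]
    refine (hgrad z a).trans (mul_le_mul_of_nonneg_left ?_ hL)
    obtain ⟨t1, t2, ht1, ht2, hsum, rfl⟩ := hz
    have : t1 • a + t2 • b - a = t2 • (b - a) := by
      have : t1 = 1 - t2 := by linarith
      rw [this]; module
    rw [this, norm_smul, Real.norm_eq_abs, abs_of_nonneg ht2]
    nlinarith [norm_nonneg (b - a)]

lemma aux_grad_zero (f : E → ℝ) (xstar : E) (hmin : ∀ y, f xstar ≤ f y) :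
    gradient f xstar = 0 := by
  have h0 : fderiv ℝ f xstar = 0 :=
    (IsLocalMin.fderiv_eq_zero (Filter.Eventually.of_forall fun y => hmin y))
  rw [gradient, h0, map_zero]

lemma aux_int_inner_W (g : E) :
    Integrable (fun u : E => (inner ℝ g u : ℝ) * Real.exp (-‖u‖ ^ 2)) := by
  refine (aux_int_norm_W.const_mul ‖g‖).mono' ?_ (Filter.Eventually.of_forall fun u => ?_)
  · exact ((continuous_const.inner continuous_id).mul
      (Real.continuous_exp.comp (continuous_norm.pow 2).neg)).aestronglyMeasurable
  · rw [Real.norm_eq_abs, abs_mul, abs_of_nonneg (Real.exp_pos _).le]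
    have h1 : |(inner ℝ g u : ℝ)| ≤ ‖g‖ * ‖u‖ := abs_real_inner_le_norm g u
    have := (Real.exp_pos (-‖u‖ ^ 2)).le
    calc |(inner ℝ g u : ℝ)| * Real.exp (-‖u‖ ^ 2) ≤ (‖g‖ * ‖u‖) * Real.exp (-‖u‖ ^ 2) :=
          mul_le_mul_of_nonneg_right h1 this
      _ = ‖g‖ * (‖u‖ * Real.exp (-‖u‖ ^ 2)) := by ring

lemma aux_pointwise_abs {L : ℝ} (hL : 0 ≤ L) (f : E → ℝ) (hdiff : Differentiable ℝ f)
    (hgrad : ∀ x y, ‖gradient f x - gradient f y‖ ≤ L * ‖x - y‖) (x : E) (σ : ℝ) (u : E) :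
    |f (x + σ • u)| ≤ |f x| + ‖gradient f x‖ * (|σ| * ‖u‖) + L * (σ ^ 2 * ‖u‖ ^ 2) := by
  have h := aux_quad hL f hdiff hgrad x (x + σ • u)
  have hb : x + σ • u - x = σ • u := by abel
  rw [hb] at h
  have hn : ‖σ • u‖ = |σ| * ‖u‖ := by rw [norm_smul, Real.norm_eq_abs]
  have hn2 : ‖σ • u‖ ^ 2 = σ ^ 2 * ‖u‖ ^ 2 := by rw [hn]; rw [mul_pow, sq_abs]
  have hi : |(inner ℝ (gradient f x) (σ • u) : ℝ)| ≤ ‖gradient f x‖ * (|σ| * ‖u‖) := by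
    calc |(inner ℝ (gradient f x) (σ • u) : ℝ)| ≤ ‖gradient f x‖ * ‖σ • u‖ :=
          abs_real_inner_le_norm _ _
      _ = ‖gradient f x‖ * (|σ| * ‖u‖) := by rw [hn]
  rw [hn2] at h
  obtain ⟨hlo, hhi⟩ := abs_le.mp h
  have h1 := le_abs_self (f x)
  have h2 := neg_abs_le (f x)
  have h3 := le_abs_self ((inner ℝ (gradient f x) (σ • u) : ℝ))
  have h4 := neg_abs_le ((inner ℝ (gradient f x) (σ • u) : ℝ))
  rw [abs_le]
  constructor <;> nlinarith

lemma aux_int_shift {L : ℝ} (hL : 0 ≤ L) (f : E → ℝ) (hdiff : Differentiable ℝ f)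
    (hgrad : ∀ x y, ‖gradient f x - gradient f y‖ ≤ L * ‖x - y‖) (x : E) (σ : ℝ) :
    Integrable (fun u : E => f (x + σ • u) * Real.exp (-‖u‖ ^ 2)) := by
  have hint : Integrable (fun u : E =>
      (|f x| + ‖gradient f x‖ * (|σ| * ‖u‖) + L * (σ ^ 2 * ‖u‖ ^ 2)) * Real.exp (-‖u‖ ^ 2)) := by
    have h1 := (aux_int_W (d := d)).const_mul |f x|
    have h2 := (aux_int_norm_W (d := d)).const_mul (‖gradient f x‖ * |σ|)
    have h3 := (aux_int_sq_W (d := d)).const_mul (L * σ ^ 2)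
    refine ((h1.add h2).add h3).congr (Filter.Eventually.of_forall fun u => ?_)
    simp only [Pi.add_apply]
    ring
  refine hint.mono' ?_ (Filter.Eventually.of_forall fun u => ?_)
  · exact ((hdiff.continuous.comp (continuous_const.add (continuous_const_smul σ : Continuous fun u : E => σ • u))).mul
      (Real.continuous_exp.comp (continuous_norm.pow 2).neg)).aestronglyMeasurable
  · rw [Real.norm_eq_abs, abs_mul, abs_of_nonneg (Real.exp_pos _).le]
    have hW := (Real.exp_pos (-‖u‖ ^ 2)).le
    exact mul_le_mul_of_nonneg_right (aux_pointwise_abs hL f hdiff hgrad x σ u) hW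

lemma aux_kW : Real.pi ^ (-(d : ℝ) / 2) * Real.pi ^ ((d : ℝ) / 2) = 1 := by
  rw [← Real.rpow_add Real.pi_pos]
  have h : (-(d : ℝ) / 2 + (d : ℝ) / 2) = 0 := by ring
  rw [h, Real.rpow_zero]

lemma aux_lower {L : ℝ} (hL : 0 ≤ L) (f : E → ℝ) (hdiff : Differentiable ℝ f)
    (hgrad : ∀ x y, ‖gradient f x - gradient f y‖ ≤ L * ‖x - y‖) (x : E) {σ : ℝ} (hσ : 0 ≤ σ) :
    f x - (L * Real.pi ^ (-(d : ℝ) / 2) * (∫ u : E, ‖u‖ ^ 2 * Real.exp (-‖u‖ ^ 2))) * σ ^ 2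
      ≤ gsmooth f σ x := by
  rcases eq_or_ne σ 0 with rfl | hσ0
  · simp [gsmooth]
  · set g := gradient f x with hg
    set W : E → ℝ := fun u => Real.exp (-‖u‖ ^ 2) with hW
    have hWnn : ∀ u : E, 0 ≤ W u := fun u => (Real.exp_pos _).le
    have hpt : ∀ u : E,
        f x * W u + σ * ((inner ℝ g u : ℝ) * W u) - (L * σ ^ 2) * (‖u‖ ^ 2 * W u)
          ≤ f (x + σ • u) * W u := by
      intro u
      have h := (abs_le.mp (aux_quad hL f hdiff hgrad x (x + σ • u))).1
      have hb : x + σ • u - x = σ • u := by abel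
      rw [hb] at h
      have hi : (inner ℝ g (σ • u) : ℝ) = σ * (inner ℝ g u : ℝ) := real_inner_smul_right g u σ
      have hn2 : ‖σ • u‖ ^ 2 = σ ^ 2 * ‖u‖ ^ 2 := by
        rw [norm_smul, Real.norm_eq_abs, mul_pow, sq_abs]
      rw [hi, hn2] at h
      have hlow : f x + σ * (inner ℝ g u : ℝ) - L * σ ^ 2 * ‖u‖ ^ 2 ≤ f (x + σ • u) := by
        linarith
      calc f x * W u + σ * ((inner ℝ g u : ℝ) * W u) - (L * σ ^ 2) * (‖u‖ ^ 2 * W u)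
          = (f x + σ * (inner ℝ g u : ℝ) - L * σ ^ 2 * ‖u‖ ^ 2) * W u := by ring
        _ ≤ f (x + σ • u) * W u := mul_le_mul_of_nonneg_right hlow (hWnn u)
    have h1 := (aux_int_W (d := d)).const_mul (f x)
    have h2 := (aux_int_inner_W g).const_mul σ
    have h3 := (aux_int_sq_W (d := d)).const_mul (L * σ ^ 2)
    have hLHSint : Integrable (fun u : E =>
        f x * W u + σ * ((inner ℝ g u : ℝ) * W u) - (L * σ ^ 2) * (‖u‖ ^ 2 * W u)) :=
      (h1.add h2).sub h3
    have hmono := integral_mono hLHSint (aux_int_shift hL f hdiff hgrad x σ) hpt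
    have hadd : Integrable (fun u : E => f x * W u + σ * ((inner ℝ g u : ℝ) * W u)) :=
      h1.add h2
    have hcomp : ∫ u : E, (f x * W u + σ * ((inner ℝ g u : ℝ) * W u)
        - (L * σ ^ 2) * (‖u‖ ^ 2 * W u))
        = f x * Real.pi ^ ((d : ℝ) / 2) - L * σ ^ 2 * ∫ u : E, ‖u‖ ^ 2 * W u := by
      rw [integral_sub hadd h3, integral_add h1 h2, integral_const_mul,
        integral_const_mul, integral_const_mul, aux_odd g, aux_integral_W]
      ring
    rw [hcomp] at hmono
    have hκ : (0:ℝ) < Real.pi ^ (-(d : ℝ) / 2) := Real.rpow_pos_of_pos Real.pi_pos _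
    have : gsmooth f σ x = Real.pi ^ (-(d : ℝ) / 2) * ∫ u : E, f (x + σ • u) * W u := by
      rw [gsmooth, if_neg hσ0]
    rw [this]
    have hmul := mul_le_mul_of_nonneg_left hmono hκ.le
    have hone := aux_kW (d := d)
    have heq : Real.pi ^ (-(d : ℝ) / 2) * (f x * Real.pi ^ ((d : ℝ) / 2)
        - L * σ ^ 2 * ∫ u : E, ‖u‖ ^ 2 * W u)
        = f x - (L * Real.pi ^ (-(d : ℝ) / 2) * ∫ u : E, ‖u‖ ^ 2 * W u) * σ ^ 2 := by
      linear_combination (f x) * hone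
    linarith [heq ▸ hmul]

lemma aux_upper {L : ℝ} (hL : 0 ≤ L) (f : E → ℝ) (hdiff : Differentiable ℝ f)
    (hgrad : ∀ x y, ‖gradient f x - gradient f y‖ ≤ L * ‖x - y‖) (xstar : E)
    (hmin : ∀ y, f xstar ≤ f y) {σ : ℝ} (hσ : 0 ≤ σ) :
    gsmooth f σ xstar
      ≤ f xstar + (L * Real.pi ^ (-(d : ℝ) / 2) * (∫ u : E, ‖u‖ ^ 2 * Real.exp (-‖u‖ ^ 2))) * σ ^ 2 := by
  rcases eq_or_ne σ 0 with rfl | hσ0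
  · have hI2 : (0:ℝ) ≤ ∫ u : E, ‖u‖ ^ 2 * Real.exp (-‖u‖ ^ 2) :=
      integral_nonneg fun u => by positivity
    have hκ : (0:ℝ) < Real.pi ^ (-(d : ℝ) / 2) := Real.rpow_pos_of_pos Real.pi_pos _
    have h0 : gsmooth f 0 xstar = f xstar := by rw [gsmooth, if_pos rfl]
    rw [h0]
    nlinarith
  · set W : E → ℝ := fun u => Real.exp (-‖u‖ ^ 2) with hW
    have hWnn : ∀ u : E, 0 ≤ W u := fun u => (Real.exp_pos _).le
    have hg0 : gradient f xstar = 0 := aux_grad_zero f xstar hmin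
    have hpt : ∀ u : E,
        f (xstar + σ • u) * W u ≤ f xstar * W u + (L * σ ^ 2) * (‖u‖ ^ 2 * W u) := by
      intro u
      have h := (abs_le.mp (aux_quad hL f hdiff hgrad xstar (xstar + σ • u))).2
      have hb : xstar + σ • u - xstar = σ • u := by abel
      rw [hb, hg0] at h
      simp only [inner_zero_left] at h
      have hn2 : ‖σ • u‖ ^ 2 = σ ^ 2 * ‖u‖ ^ 2 := by
        rw [norm_smul, Real.norm_eq_abs, mul_pow, sq_abs]
      rw [hn2] at h
      have hup : f (xstar + σ • u) ≤ f xstar + L * σ ^ 2 * ‖u‖ ^ 2 := by linarith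
      calc f (xstar + σ • u) * W u
          ≤ (f xstar + L * σ ^ 2 * ‖u‖ ^ 2) * W u := mul_le_mul_of_nonneg_right hup (hWnn u)
        _ = f xstar * W u + (L * σ ^ 2) * (‖u‖ ^ 2 * W u) := by ring
    have h1 := (aux_int_W (d := d)).const_mul (f xstar)
    have h3 := (aux_int_sq_W (d := d)).const_mul (L * σ ^ 2)
    have hadd : Integrable (fun u : E => f xstar * W u + (L * σ ^ 2) * (‖u‖ ^ 2 * W u)) :=
      h1.add h3
    have hmono := integral_mono (aux_int_shift hL f hdiff hgrad xstar σ) hadd hpt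
    have hcomp : ∫ u : E, (f xstar * W u + (L * σ ^ 2) * (‖u‖ ^ 2 * W u))
        = f xstar * Real.pi ^ ((d : ℝ) / 2) + L * σ ^ 2 * ∫ u : E, ‖u‖ ^ 2 * W u := by
      rw [integral_add h1 h3, integral_const_mul, integral_const_mul, aux_integral_W]
    rw [hcomp] at hmono
    have hκ : (0:ℝ) < Real.pi ^ (-(d : ℝ) / 2) := Real.rpow_pos_of_pos Real.pi_pos _
    have hgs : gsmooth f σ xstar = Real.pi ^ (-(d : ℝ) / 2) * ∫ u : E, f (xstar + σ • u) * W u := by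
      rw [gsmooth, if_neg hσ0]
    rw [hgs]
    have hmul := mul_le_mul_of_nonneg_left hmono hκ.le
    have hone := aux_kW (d := d)
    have heq : Real.pi ^ (-(d : ℝ) / 2) * (f xstar * Real.pi ^ ((d : ℝ) / 2)
        + L * σ ^ 2 * ∫ u : E, ‖u‖ ^ 2 * W u)
        = f xstar + (L * Real.pi ^ (-(d : ℝ) / 2) * ∫ u : E, ‖u‖ ^ 2 * W u) * σ ^ 2 := by
      linear_combination (f xstar) * hone
    linarith [heq ▸ hmul]

lemma aux_compact {δ : ℝ} (hδ : 0 < δ) (f : E → ℝ) (hcont : Continuous f)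
    (xstar : E) (hmin : ∀ y, f xstar ≤ f y)
    (hbound : Bornology.IsBounded {x : E | f x - f xstar ≤ δ})
    {ε : ℝ} (hε : 0 < ε) :
    ∃ η : ℝ, 0 < η ∧ ∀ x : E, f x - f xstar ≤ η →
      Metric.infDist x {x : E | ∀ y, f x ≤ f y} < ε := by
  by_contra hcon
  push_neg at hcon
  choose x hx1 hx2 using fun n : ℕ =>
    hcon (min δ (1 / ((n : ℝ) + 1))) (lt_min hδ (by positivity))
  have hmem : ∀ n, x n ∈ {x : E | f x - f xstar ≤ δ} := fun n =>
    (hx1 n).trans (min_le_left _ _)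
  obtain ⟨p, -, φ, hφ, hlim⟩ := tendsto_subseq_of_bounded hbound hmem
  have h1 : Filter.Tendsto (fun n => f (x (φ n)) - f xstar) Filter.atTop
      (nhds (f p - f xstar)) :=
    ((hcont.continuousAt.tendsto.comp hlim).sub tendsto_const_nhds)
  have h2 : Filter.Tendsto (fun n : ℕ => 1 / ((n : ℝ) + 1)) Filter.atTop (nhds 0) :=
    tendsto_one_div_add_atTop_nhds_zero_nat
  have hle : ∀ n : ℕ, f (x (φ n)) - f xstar ≤ 1 / ((n : ℝ) + 1) := by
    intro n
    refine ((hx1 (φ n)).trans (min_le_right _ _)).trans ?_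
    have hφn : (n : ℝ) + 1 ≤ (φ n : ℝ) + 1 := by
      have h : n ≤ φ n := hφ.le_apply
      have : (n : ℝ) ≤ (φ n : ℝ) := Nat.cast_le.mpr h
      linarith
    exact one_div_le_one_div_of_le (by positivity) hφn
  have hfp : f p - f xstar ≤ 0 :=
    le_of_tendsto_of_tendsto' h1 h2 hle
  have hpS : p ∈ {x : E | ∀ y, f x ≤ f y} := fun y => by linarith [hmin y]
  have h3 : Filter.Tendsto (fun n => Metric.infDist (x (φ n))
      {x : E | ∀ y, f x ≤ f y}) Filter.atTop
      (nhds (Metric.infDist p {x : E | ∀ y, f x ≤ f y})) :=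
    (Metric.continuous_infDist_pt _).continuousAt.tendsto.comp hlim
  have h4 : ε ≤ Metric.infDist p {x : E | ∀ y, f x ≤ f y} :=
    ge_of_tendsto h3 (Filter.Eventually.of_forall fun n => hx2 (φ n))
  rw [Metric.infDist_zero_of_mem hpS] at h4
  linarith

end AuxGsmooth

/-- If `f⋆(δ)` is bounded for some `δ > 0` and `σ_n → 0`, then minimizers of
`f_{σ_n}` get arbitrarily close to the minimizer set `f⋆(0)` of `f`. -/
theorem gsmooth_minimizers_converge {d : ℕ} (hd : 1 ≤ d) {L δ : ℝ} (hL : 0 < L) (hδ : 0 < δ)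
    (f : EuclideanSpace ℝ (Fin d) → ℝ)
    (hdiff : Differentiable ℝ f)
    (hgrad : ∀ x y, ‖gradient f x - gradient f y‖ ≤ L * ‖x - y‖)
    (xstar : EuclideanSpace ℝ (Fin d)) (hmin : ∀ y, f xstar ≤ f y)
    (hbound : Bornology.IsBounded {x : EuclideanSpace ℝ (Fin d) | f x - f xstar ≤ δ})
    (σ : ℕ → ℝ) (hσ : ∀ n, 0 ≤ σ n)
    (hto : Filter.Tendsto σ Filter.atTop (nhds 0)) :
    ∀ ε : ℝ, 0 < ε → ∃ N : ℕ, ∀ n, N ≤ n → ∀ xsig : EuclideanSpace ℝ (Fin d),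
      (∀ x, gsmooth f (σ n) xsig ≤ gsmooth f (σ n) x) →
      Metric.infDist xsig {x : EuclideanSpace ℝ (Fin d) | ∀ y, f x ≤ f y} < ε := by
  intro ε hε
  obtain ⟨η, hη, hkey⟩ := aux_compact hδ f hdiff.continuous xstar hmin hbound hε
  set C : ℝ := L * Real.pi ^ (-(d : ℝ) / 2) *
    (∫ u : EuclideanSpace ℝ (Fin d), ‖u‖ ^ 2 * Real.exp (-‖u‖ ^ 2)) with hC
  have htend : Filter.Tendsto (fun n => 2 * C * σ n ^ 2) Filter.atTop (nhds 0) := by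
    have h1 : Filter.Tendsto (fun n => σ n * σ n) Filter.atTop (nhds 0) := by
      simpa using hto.mul hto
    have h2 := h1.const_mul (2 * C)
    simp only [mul_zero] at h2
    refine h2.congr fun n => by ring
  have hev : ∀ᶠ n in Filter.atTop, 2 * C * σ n ^ 2 < η :=
    htend.eventually_lt_const hη
  obtain ⟨N, hN⟩ := Filter.eventually_atTop.mp hev
  refine ⟨N, fun n hn xsig hxsig => ?_⟩
  have hlow := aux_lower hL.le f hdiff hgrad xsig (hσ n)
  have hup := aux_upper hL.le f hdiff hgrad xstar hmin (hσ n)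
  have hchain : f xsig - f xstar ≤ 2 * C * σ n ^ 2 := by
    have := hxsig xstar
    rw [← hC] at hlow hup
    linarith
  exact hkey xsig (by linarith [hN n hn])
end
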